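/- Let α∈(0,2), H∈(0,1), κ=H−1/α, and t∈ℝ. Let λ be a Borel measure on ℝ with λ(ℝ)<∞ and ∫_ℝ |z|^α λ(dz) < ∞. Then ∫_ℝ ∫₀^{2π} ∫_ℝ | cos(v + z·ln|t+u|)·(t+u)₊^κ − cos(v + z·ln|u|)·u₊^κ |^α du dv λ(dz) < ∞, where the integrand is defined for u∉{0,−t} (a set of full Lebesgue measure). -/

import Mathlib

open MeasureTheory Real

/-- `u₊^κ`: equals `u^κ` for `u > 0` and `0` for `u ≤ 0`; for `κ = 0` it is the
indicator of `(0,∞)` (via `rpow`). -/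
noncomputable def pPow (κ u : ℝ) : ℝ := if 0 < u then u ^ κ else 0

set_option maxHeartbeats 1000000

lemma pPow_nonneg (κ u : ℝ) : 0 ≤ pPow κ u := by
  unfold pPow; split
  · exact Real.rpow_nonneg (le_of_lt ‹_›) _
  · exact le_refl 0

lemma pPow_of_pos {u : ℝ} (h : 0 < u) (κ : ℝ) : pPow κ u = u ^ κ := if_pos h
lemma pPow_of_nonpos {u : ℝ} (h : u ≤ 0) (κ : ℝ) : pPow κ u = 0 := if_neg (not_lt.2 h)

lemma measurable_pPow (κ : ℝ) : Measurable (pPow κ) := by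
  unfold pPow
  exact Measurable.ite measurableSet_Ioi (by measurability) measurable_const

lemma cos_diff_le (a b : ℝ) : |Real.cos a - Real.cos b| ≤ |a - b| := by
  rw [Real.cos_sub_cos]
  have h1 : |Real.sin ((a+b)/2)| ≤ 1 :=
    abs_le.mpr ⟨Real.neg_one_le_sin _, Real.sin_le_one _⟩
  have h2 : |Real.sin ((a-b)/2)| ≤ |(a-b)/2| := Real.abs_sin_le_abs
  have h3 : |(-2) * Real.sin ((a+b)/2) * Real.sin ((a-b)/2)|
      = 2 * (|Real.sin ((a+b)/2)| * |Real.sin ((a-b)/2)|) := by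
    rw [abs_mul, abs_mul]; norm_num [mul_assoc]
  rw [h3]
  have h4 : |(a-b)/2| = |a-b|/2 := by rw [abs_div]; norm_num
  rw [h4] at h2
  nlinarith [abs_nonneg (Real.sin ((a-b)/2)), abs_nonneg (Real.sin ((a+b)/2)), abs_nonneg (a-b)]

lemma two_rpow_bound {α : ℝ} (hα : 0 ≤ α) {p q : ℝ} (hp : 0 ≤ p) (hq : 0 ≤ q) :
    (p + q) ^ α ≤ 2 ^ α * (p ^ α + q ^ α) := by
  have hm : p + q ≤ 2 * max p q := by
    rcases le_total p q with h | h
    · rw [max_eq_right h]; linarith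
    · rw [max_eq_left h]; linarith
  have h0 : (0:ℝ) ≤ max p q := le_max_of_le_left hp
  calc (p + q) ^ α ≤ (2 * max p q) ^ α := Real.rpow_le_rpow (by linarith) hm hα
    _ = 2 ^ α * (max p q) ^ α := Real.mul_rpow (by norm_num) h0
    _ ≤ 2 ^ α * (p ^ α + q ^ α) := by
        apply mul_le_mul_of_nonneg_left _ (Real.rpow_nonneg (by norm_num) α)
        rcases le_total p q with h | h
        · rw [max_eq_right h]; nlinarith [Real.rpow_nonneg hp α]
        · rw [max_eq_left h]; nlinarith [Real.rpow_nonneg hq α]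

lemma rpow_diff_le {κ : ℝ} (hκ1 : κ ≤ 1) {t u : ℝ} (ht : 0 ≤ t) (hu : 0 < u) :
    |(t + u) ^ κ - u ^ κ| ≤ |κ| * t * u ^ (κ - 1) := by
  rcases eq_or_lt_of_le ht with rfl | ht'
  · simp
  · have hlt : u < u + t := by linarith
    have hcont : ContinuousOn (fun x : ℝ => x ^ κ) (Set.Icc u (u + t)) := fun x hx =>
      (Real.continuousAt_rpow_const x κ (Or.inl (ne_of_gt (lt_of_lt_of_le hu hx.1)))).continuousWithinAt
    obtain ⟨c, hc, hceq⟩ := exists_hasDerivAt_eq_slope (fun x : ℝ => x ^ κ)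
      (fun x => κ * x ^ (κ - 1)) hlt hcont
      (fun x hx => Real.hasDerivAt_rpow_const (Or.inl (ne_of_gt (lt_trans hu hx.1))))
    have hc0 : 0 < c := lt_trans hu hc.1
    have hden : (u + t) - u = t := by ring
    rw [hden, eq_div_iff (ne_of_gt ht')] at hceq
    have heq : (t + u) ^ κ - u ^ κ = κ * c ^ (κ - 1) * t := by
      rw [show t + u = u + t from by ring]; linarith [hceq]
    rw [heq, abs_mul, abs_mul, abs_of_nonneg (Real.rpow_nonneg hc0.le _),
      abs_of_nonneg ht'.le]
    have hmono : c ^ (κ - 1) ≤ u ^ (κ - 1) :=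
      Real.rpow_le_rpow_of_nonpos hu hc.1.le (by linarith)
    calc |κ| * c ^ (κ - 1) * t ≤ |κ| * u ^ (κ - 1) * t := by
          apply mul_le_mul_of_nonneg_right _ ht'.le
          exact mul_le_mul_of_nonneg_left hmono (abs_nonneg κ)
      _ = |κ| * t * u ^ (κ - 1) := by ring

lemma abs_log_one_add_le {x : ℝ} (h : |x| ≤ 1/2) : |Real.log (1 + x)| ≤ 2 * |x| := by
  have hx := abs_le.mp h
  have h1 : (0:ℝ) < 1 + x := by linarith
  have hup : Real.log (1 + x) ≤ x := by
    have := Real.log_le_sub_one_of_pos h1; linarith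
  have hlow : 1 - (1+x)⁻¹ ≤ Real.log (1 + x) := by
    have h2 : (0:ℝ) < (1+x)⁻¹ := by positivity
    have h3 := Real.log_le_sub_one_of_pos h2
    rw [Real.log_inv] at h3; linarith
  rw [abs_le]
  constructor
  · have key : -(2 * |x|) ≤ 1 - (1+x)⁻¹ := by
      rw [show (1:ℝ) - (1+x)⁻¹ = x / (1+x) from by field_simp; ring, le_div_iff₀ h1]
      rcases abs_cases x with ⟨he, hs⟩ | ⟨he, hs⟩ <;> rw [he] <;> nlinarith
    linarith
  · calc Real.log (1+x) ≤ x := hup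
      _ ≤ |x| := le_abs_self x
      _ ≤ 2*|x| := by linarith [abs_nonneg x]

lemma abs_log_sub_log_le {t u : ℝ} (hu : 0 < u) (h : 2 * |t| < u) :
    |Real.log (abs (t + u)) - Real.log (abs u)| ≤ 2 * |t| / u := by
  have habs := abs_nonneg t
  have htu : 0 < t + u := by rcases abs_cases t with ⟨he, _⟩ | ⟨he, _⟩ <;> linarith
  rw [abs_of_pos htu, abs_of_pos hu]
  have hx : |t / u| ≤ 1 / 2 := by
    rw [abs_div, abs_of_pos hu, div_le_iff₀ hu]; linarith
  have hlog : Real.log (t + u) - Real.log u = Real.log (1 + t / u) := by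
    rw [← Real.log_div (ne_of_gt htu) (ne_of_gt hu)]
    congr 1; field_simp; ring
  rw [hlog]
  calc |Real.log (1 + t/u)| ≤ 2 * |t/u| := abs_log_one_add_le hx
    _ = 2 * |t| / u := by rw [abs_div, abs_of_pos hu]; ring

lemma lint_Ioc_rpow {p : ℝ} (hp : -1 < p) (M : ℝ) :
    ∫⁻ u in Set.Ioc (0:ℝ) M, ENNReal.ofReal (u ^ p) < ⊤ := by
  rcases le_or_gt M 0 with hM | hM
  · rw [Set.Ioc_eq_empty (not_lt.mpr hM)]; simp
  · have hii : IntervalIntegrable (fun x : ℝ => x ^ p) volume 0 M :=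
      intervalIntegral.intervalIntegrable_rpow' hp
    rw [intervalIntegrable_iff, Set.uIoc_of_le hM.le] at hii
    calc ∫⁻ u in Set.Ioc (0:ℝ) M, ENNReal.ofReal (u ^ p)
        ≤ ∫⁻ u in Set.Ioc (0:ℝ) M, (‖u ^ p‖₊ : ENNReal) :=
          lintegral_mono fun u => Real.ofReal_le_enorm _
      _ < ⊤ := hii.2

lemma lint_Ioi_rpow {p : ℝ} (hp : p < -1) {M : ℝ} (hM : 0 < M) :
    ∫⁻ u in Set.Ioi M, ENNReal.ofReal (u ^ p) < ⊤ := by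
  have hii : IntegrableOn (fun x : ℝ => x ^ p) (Set.Ioi M) :=
    integrableOn_Ioi_rpow_of_lt hp hM
  calc ∫⁻ u in Set.Ioi M, ENNReal.ofReal (u ^ p)
      ≤ ∫⁻ u in Set.Ioi M, (‖u ^ p‖₊ : ENNReal) :=
        lintegral_mono fun u => Real.ofReal_le_enorm _
    _ < ⊤ := hii.2

lemma Gfin_nonneg {α κ : ℝ} (hα0 : 0 < α) (hκ1 : κ ≤ 1) (hκα : -1 < α * κ)
    (hκα' : α * (κ - 1) < -1) {t : ℝ} (ht : 0 ≤ t) :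
    ∫⁻ u : ℝ, ENNReal.ofReal (|pPow κ (t + u) - pPow κ u| ^ α) < ⊤ := by
  set f1 : ℝ → ENNReal :=
    (Set.Ioc (-t) 0).indicator (fun u => ENNReal.ofReal ((t + u) ^ (α * κ))) with hf1
  set f2 : ℝ → ENNReal :=
    (Set.Ioc (0:ℝ) 1).indicator
      (fun u => ENNReal.ofReal (2 ^ α * ((t + 1) ^ (α * κ) + 2 * u ^ (α * κ)))) with hf2
  set f3 : ℝ → ENNReal :=
    (Set.Ioi (1:ℝ)).indicator
      (fun u => ENNReal.ofReal ((|κ| * t) ^ α * u ^ (α * (κ - 1)))) with hf3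
  have hbound : ∀ u : ℝ,
      ENNReal.ofReal (|pPow κ (t + u) - pPow κ u| ^ α) ≤ f1 u + f2 u + f3 u := by
    intro u
    rcases le_or_gt (t + u) 0 with h1 | h1
    · have hu : u ≤ 0 := by linarith
      rw [pPow_of_nonpos h1, pPow_of_nonpos hu]
      simp [Real.zero_rpow (ne_of_gt hα0)]
    rcases le_or_gt u 0 with h2 | h2
    · have hmem : u ∈ Set.Ioc (-t) 0 := ⟨by linarith, h2⟩
      have he : ENNReal.ofReal (|pPow κ (t + u) - pPow κ u| ^ α)
          = f1 u := by
        rw [hf1, Set.indicator_of_mem hmem, pPow_of_nonpos h2, pPow_of_pos h1, sub_zero,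
          abs_of_nonneg (Real.rpow_nonneg h1.le κ), ← Real.rpow_mul h1.le, mul_comm κ α]
      rw [he]
      exact le_trans le_self_add le_self_add
    rcases le_or_gt u 1 with h3 | h3
    · have hmem : u ∈ Set.Ioc (0:ℝ) 1 := ⟨h2, h3⟩
      rw [pPow_of_pos h1, pPow_of_pos h2]
      have key : |(t+u) ^ κ - u ^ κ| ^ α ≤ 2 ^ α * ((t + 1) ^ (α * κ) + 2 * u ^ (α * κ)) := by
        have e1 : |(t+u) ^ κ - u ^ κ| ≤ (t+u) ^ κ + u ^ κ := by
          calc |(t+u) ^ κ - u ^ κ| ≤ |(t+u) ^ κ| + |u ^ κ| := abs_sub _ _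
            _ = (t+u) ^ κ + u ^ κ := by
                rw [abs_of_nonneg (Real.rpow_nonneg h1.le κ),
                  abs_of_nonneg (Real.rpow_nonneg h2.le κ)]
        have e2 : |(t+u) ^ κ - u ^ κ| ^ α ≤ ((t+u) ^ κ + u ^ κ) ^ α :=
          Real.rpow_le_rpow (abs_nonneg _) e1 hα0.le
        have e3 : ((t+u) ^ κ + u ^ κ) ^ α ≤ 2 ^ α * (((t+u) ^ κ) ^ α + (u ^ κ) ^ α) :=
          two_rpow_bound hα0.le (Real.rpow_nonneg h1.le κ) (Real.rpow_nonneg h2.le κ)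
        have e4 : ((t+u) ^ κ) ^ α = (t+u) ^ (α * κ) := by
          rw [← Real.rpow_mul h1.le, mul_comm κ α]
        have e5 : (u ^ κ) ^ α = u ^ (α * κ) := by
          rw [← Real.rpow_mul h2.le, mul_comm κ α]
        have e6 : (t+u) ^ (α * κ) ≤ (t + 1) ^ (α * κ) + u ^ (α * κ) := by
          rcases le_or_gt 0 (α * κ) with hs | hs
          · have : (t+u) ^ (α*κ) ≤ (t+1) ^ (α*κ) :=
              Real.rpow_le_rpow h1.le (by linarith) hs
            nlinarith [Real.rpow_nonneg h2.le (α*κ)]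
          · have : (t+u) ^ (α*κ) ≤ u ^ (α*κ) :=
              Real.rpow_le_rpow_of_nonpos h2 (by linarith) hs.le
            nlinarith [Real.rpow_nonneg (by linarith : (0:ℝ) ≤ t + 1) (α*κ)]
        have h2α : (0:ℝ) ≤ 2 ^ α := Real.rpow_nonneg (by norm_num) α
        calc |(t+u) ^ κ - u ^ κ| ^ α ≤ 2 ^ α * (((t+u) ^ κ) ^ α + (u ^ κ) ^ α) :=
              le_trans e2 e3
          _ = 2 ^ α * ((t+u) ^ (α * κ) + u ^ (α * κ)) := by rw [e4, e5]
          _ ≤ 2 ^ α * ((t + 1) ^ (α * κ) + 2 * u ^ (α * κ)) := by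
              apply mul_le_mul_of_nonneg_left _ h2α
              nlinarith [Real.rpow_nonneg h2.le (α*κ)]
      refine le_trans (ENNReal.ofReal_le_ofReal key) ?_
      have he : ENNReal.ofReal (2 ^ α * ((t + 1) ^ (α * κ) + 2 * u ^ (α * κ))) = f2 u := by
        rw [hf2, Set.indicator_of_mem hmem]
      rw [he]
      exact le_trans le_add_self le_self_add
    · rw [pPow_of_pos h1, pPow_of_pos h2]
      have key : |(t+u) ^ κ - u ^ κ| ^ α ≤ (|κ| * t) ^ α * u ^ (α * (κ - 1)) := by
        have e1 := rpow_diff_le hκ1 ht h2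
        have e2 : |(t+u) ^ κ - u ^ κ| ^ α ≤ (|κ| * t * u ^ (κ - 1)) ^ α :=
          Real.rpow_le_rpow (abs_nonneg _) e1 hα0.le
        have e3 : (|κ| * t * u ^ (κ - 1)) ^ α = (|κ| * t) ^ α * u ^ (α * (κ - 1)) := by
          rw [Real.mul_rpow (by positivity) (Real.rpow_nonneg h2.le _),
            ← Real.rpow_mul h2.le, mul_comm (κ - 1) α]
        rw [e3] at e2; exact e2
      refine le_trans (ENNReal.ofReal_le_ofReal key) ?_
      have he : ENNReal.ofReal ((|κ| * t) ^ α * u ^ (α * (κ - 1))) = f3 u := by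
        rw [hf3, Set.indicator_of_mem (Set.mem_Ioi.mpr h3)]
      rw [he]
      exact le_add_self
  have mrp : Measurable fun x : ℝ => x ^ (α * κ) := by measurability
  have m1 : Measurable f1 :=
    Measurable.indicator (Measurable.ennreal_ofReal
      (mrp.comp (measurable_const.add measurable_id))) measurableSet_Ioc
  have m2 : Measurable f2 :=
    Measurable.indicator (Measurable.ennreal_ofReal
      (measurable_const.mul (measurable_const.add (mrp.const_mul 2)))) measurableSet_Ioc
  have hi1 : ∫⁻ u, f1 u < ⊤ := by
    have e : f1 = fun u => (Set.Ioc (0:ℝ) t).indicator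
        (fun s => ENNReal.ofReal (s ^ (α * κ))) (u + t) := by
      funext u
      by_cases h : u ∈ Set.Ioc (-t) 0
      · have hm2 : u + t ∈ Set.Ioc (0:ℝ) t :=
          Set.mem_Ioc.mpr ⟨by linarith [h.1], by linarith [h.2]⟩
        rw [hf1, Set.indicator_of_mem h, Set.indicator_of_mem hm2, add_comm u t]
      · rw [hf1, Set.indicator_of_notMem h, Set.indicator_of_notMem]
        intro hmem
        exact h ⟨by linarith [hmem.1], by linarith [hmem.2]⟩
    rw [e, lintegral_add_right_eq_self
      ((Set.Ioc (0:ℝ) t).indicator fun s => ENNReal.ofReal (s ^ (α * κ))) t,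
      lintegral_indicator measurableSet_Ioc]
    exact lint_Ioc_rpow hκα t
  have hi2 : ∫⁻ u, f2 u < ⊤ := by
    rw [hf2, lintegral_indicator measurableSet_Ioc]
    have hb : ∀ u : ℝ, ENNReal.ofReal (2 ^ α * ((t + 1) ^ (α * κ) + 2 * u ^ (α * κ)))
        ≤ ENNReal.ofReal (2 ^ α * (t + 1) ^ (α * κ))
          + ENNReal.ofReal (2 ^ α * 2) * ENNReal.ofReal (u ^ (α * κ)) := by
      intro u
      rw [← ENNReal.ofReal_mul (by positivity)]
      refine le_trans (le_of_eq (by ring_nf)) (ENNReal.ofReal_add_le)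
    calc ∫⁻ u in Set.Ioc (0:ℝ) 1, ENNReal.ofReal (2 ^ α * ((t + 1) ^ (α * κ) + 2 * u ^ (α * κ)))
        ≤ ∫⁻ u in Set.Ioc (0:ℝ) 1, (ENNReal.ofReal (2 ^ α * (t + 1) ^ (α * κ))
            + ENNReal.ofReal (2 ^ α * 2) * ENNReal.ofReal (u ^ (α * κ))) :=
          lintegral_mono hb
      _ = ENNReal.ofReal (2 ^ α * (t + 1) ^ (α * κ)) * volume (Set.Ioc (0:ℝ) 1)
          + ENNReal.ofReal (2 ^ α * 2) * ∫⁻ u in Set.Ioc (0:ℝ) 1, ENNReal.ofReal (u ^ (α * κ)) := by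
          rw [lintegral_add_left measurable_const,
            lintegral_const_mul' _ _ ENNReal.ofReal_ne_top, setLIntegral_const]
      _ < ⊤ := by
          apply ENNReal.add_lt_top.mpr
          constructor
          · exact ENNReal.mul_lt_top ENNReal.ofReal_lt_top
              (by rw [Real.volume_Ioc]; exact ENNReal.ofReal_lt_top)
          · exact ENNReal.mul_lt_top ENNReal.ofReal_lt_top (lint_Ioc_rpow hκα 1)
  have hi3 : ∫⁻ u, f3 u < ⊤ := by
    rw [hf3, lintegral_indicator measurableSet_Ioi]
    have hb : ∀ u : ℝ, ENNReal.ofReal ((|κ| * t) ^ α * u ^ (α * (κ - 1)))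
        = ENNReal.ofReal ((|κ| * t) ^ α) * ENNReal.ofReal (u ^ (α * (κ - 1))) :=
      fun u => ENNReal.ofReal_mul (by positivity)
    rw [lintegral_congr fun u => hb u, lintegral_const_mul' _ _ ENNReal.ofReal_ne_top]
    exact ENNReal.mul_lt_top ENNReal.ofReal_lt_top (lint_Ioi_rpow hκα' one_pos)
  calc ∫⁻ u : ℝ, ENNReal.ofReal (|pPow κ (t + u) - pPow κ u| ^ α)
      ≤ ∫⁻ u, (f1 u + f2 u + f3 u) := lintegral_mono hbound
    _ = (∫⁻ u, f1 u) + (∫⁻ u, f2 u) + (∫⁻ u, f3 u) := by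
        rw [lintegral_add_left (f := fun u => f1 u + f2 u) (m1.add m2), lintegral_add_left m1]
    _ < ⊤ := by
        apply ENNReal.add_lt_top.mpr
        exact ⟨ENNReal.add_lt_top.mpr ⟨hi1, hi2⟩, hi3⟩

lemma Gfin {α κ : ℝ} (hα0 : 0 < α) (hκ1 : κ ≤ 1) (hκα : -1 < α * κ)
    (hκα' : α * (κ - 1) < -1) (t : ℝ) :
    ∫⁻ u : ℝ, ENNReal.ofReal (|pPow κ (t + u) - pPow κ u| ^ α) < ⊤ := by
  rcases le_or_gt 0 t with ht | ht
  · exact Gfin_nonneg hα0 hκ1 hκα hκα' ht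
  · have h := Gfin_nonneg hα0 hκ1 hκα hκα' (t := -t) (by linarith)
    have e : (fun u : ℝ => ENNReal.ofReal (|pPow κ (t + u) - pPow κ u| ^ α))
        = fun u => (fun w => ENNReal.ofReal (|pPow κ (-t + w) - pPow κ w| ^ α)) (u + t) := by
      funext u
      simp only
      rw [show -t + (u + t) = u from by ring, show t + u = u + t from by ring, abs_sub_comm]
    rw [e, lintegral_add_right_eq_self
      (fun w => ENNReal.ofReal (|pPow κ (-t + w) - pPow κ w| ^ α)) t]
    exact h

lemma Hfin {α κ : ℝ} (hα0 : 0 < α) (hκα : -1 < α * κ) (hκα2 : α * κ - α < -1) (t : ℝ) :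
    ∃ C1 C2 : ENNReal, C1 < ⊤ ∧ C2 < ⊤ ∧ ∀ z : ℝ,
      ∫⁻ u : ℝ, ENNReal.ofReal
        ((min 2 (|z| * |Real.log (abs (t + u)) - Real.log (abs u)|) * pPow κ u) ^ α)
        ≤ C1 + C2 * ENNReal.ofReal (|z| ^ α) := by
  set M : ℝ := 1 + 2 * |t| with hMdef
  have hM0 : (0:ℝ) < M := by positivity
  have hC1fin : ∫⁻ u in Set.Ioc (0:ℝ) M, ENNReal.ofReal (2 ^ α * u ^ (α * κ)) < ⊤ := by
    have hb : ∀ u : ℝ, ENNReal.ofReal (2 ^ α * u ^ (α * κ))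
        = ENNReal.ofReal (2 ^ α) * ENNReal.ofReal (u ^ (α * κ)) :=
      fun u => ENNReal.ofReal_mul (by positivity)
    rw [lintegral_congr fun u => hb u, lintegral_const_mul' _ _ ENNReal.ofReal_ne_top]
    exact ENNReal.mul_lt_top ENNReal.ofReal_lt_top (lint_Ioc_rpow hκα M)
  have hC2fin : ∫⁻ u in Set.Ioi M, ENNReal.ofReal ((2 * |t|) ^ α * u ^ (α * κ - α)) < ⊤ := by
    have hb : ∀ u : ℝ, ENNReal.ofReal ((2 * |t|) ^ α * u ^ (α * κ - α))
        = ENNReal.ofReal ((2 * |t|) ^ α) * ENNReal.ofReal (u ^ (α * κ - α)) :=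
      fun u => ENNReal.ofReal_mul (by positivity)
    rw [lintegral_congr fun u => hb u, lintegral_const_mul' _ _ ENNReal.ofReal_ne_top]
    exact ENNReal.mul_lt_top ENNReal.ofReal_lt_top (lint_Ioi_rpow hκα2 hM0)
  refine ⟨_, _, hC1fin, hC2fin, ?_⟩
  intro z
  set L : ℝ → ℝ := fun u => |Real.log (abs (t + u)) - Real.log (abs u)| with hL
  have hbound : ∀ u : ℝ,
      ENNReal.ofReal ((min 2 (|z| * L u) * pPow κ u) ^ α)
      ≤ (Set.Ioc (0:ℝ) M).indicator (fun u => ENNReal.ofReal (2 ^ α * u ^ (α * κ))) u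
        + ENNReal.ofReal (|z| ^ α)
          * (Set.Ioi M).indicator (fun u => ENNReal.ofReal ((2 * |t|) ^ α * u ^ (α * κ - α))) u := by
    intro u
    have hmn : 0 ≤ min 2 (|z| * L u) := le_min (by norm_num) (by positivity)
    rcases le_or_gt u 0 with h0 | h0
    · rw [pPow_of_nonpos h0, mul_zero, Real.zero_rpow hα0.ne']
      simp
    rcases le_or_gt u M with h1 | h1
    · have key : (min 2 (|z| * L u) * pPow κ u) ^ α ≤ 2 ^ α * u ^ (α * κ) := by
        rw [pPow_of_pos h0]
        have hs : min 2 (|z| * L u) * u ^ κ ≤ 2 * u ^ κ :=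
          mul_le_mul_of_nonneg_right (min_le_left _ _) (Real.rpow_nonneg h0.le κ)
        calc (min 2 (|z| * L u) * u ^ κ) ^ α ≤ (2 * u ^ κ) ^ α :=
              Real.rpow_le_rpow (mul_nonneg hmn (Real.rpow_nonneg h0.le κ)) hs hα0.le
          _ = 2 ^ α * u ^ (α * κ) := by
              rw [Real.mul_rpow (by norm_num) (Real.rpow_nonneg h0.le κ),
                ← Real.rpow_mul h0.le, mul_comm κ α]
      refine le_trans (ENNReal.ofReal_le_ofReal key) ?_
      rw [Set.indicator_of_mem (Set.mem_Ioc.mpr ⟨h0, h1⟩)]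
      exact le_self_add
    · have hu2t : 2 * |t| < u := by linarith
      have hlog : L u ≤ 2 * |t| / u := abs_log_sub_log_le h0 hu2t
      have key : (min 2 (|z| * L u) * pPow κ u) ^ α
          ≤ |z| ^ α * ((2 * |t|) ^ α * u ^ (α * κ - α)) := by
        rw [pPow_of_pos h0]
        have h2 : min 2 (|z| * L u) * u ^ κ ≤ |z| * (2 * |t| * u ^ (κ - 1)) := by
          have h3 : min 2 (|z| * L u) ≤ |z| * (2 * |t| / u) :=
            le_trans (min_le_right _ _) (mul_le_mul_of_nonneg_left hlog (abs_nonneg z))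
          have h4 : |z| * (2 * |t| / u) * u ^ κ = |z| * (2 * |t| * u ^ (κ - 1)) := by
            rw [Real.rpow_sub h0, Real.rpow_one]; ring
          calc min 2 (|z| * L u) * u ^ κ ≤ |z| * (2 * |t| / u) * u ^ κ :=
                mul_le_mul_of_nonneg_right h3 (Real.rpow_nonneg h0.le κ)
            _ = |z| * (2 * |t| * u ^ (κ - 1)) := h4
        calc (min 2 (|z| * L u) * u ^ κ) ^ α ≤ (|z| * (2 * |t| * u ^ (κ - 1))) ^ α :=
              Real.rpow_le_rpow (mul_nonneg hmn (Real.rpow_nonneg h0.le κ)) h2 hα0.le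
          _ = |z| ^ α * ((2 * |t|) ^ α * u ^ (α * κ - α)) := by
              rw [Real.mul_rpow (abs_nonneg z) (by positivity),
                Real.mul_rpow (by positivity) (Real.rpow_nonneg h0.le _),
                ← Real.rpow_mul h0.le, show (κ - 1) * α = α * κ - α from by ring]
      refine le_trans (ENNReal.ofReal_le_ofReal key) ?_
      rw [Set.indicator_of_mem (Set.mem_Ioi.mpr h1),
        ENNReal.ofReal_mul (by positivity : (0:ℝ) ≤ |z| ^ α)]
      exact le_add_self
  have mrp : Measurable fun x : ℝ => x ^ (α * κ) := by measurability
  have m1 : Measurable fun u : ℝ =>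
      (Set.Ioc (0:ℝ) M).indicator (fun u => ENNReal.ofReal (2 ^ α * u ^ (α * κ))) u :=
    Measurable.indicator (Measurable.ennreal_ofReal (mrp.const_mul _)) measurableSet_Ioc
  calc ∫⁻ u : ℝ, ENNReal.ofReal ((min 2 (|z| * L u) * pPow κ u) ^ α)
      ≤ ∫⁻ u : ℝ, ((Set.Ioc (0:ℝ) M).indicator (fun u => ENNReal.ofReal (2 ^ α * u ^ (α * κ))) u
        + ENNReal.ofReal (|z| ^ α)
          * (Set.Ioi M).indicator (fun u => ENNReal.ofReal ((2 * |t|) ^ α * u ^ (α * κ - α))) u) :=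
        lintegral_mono hbound
    _ = (∫⁻ u in Set.Ioc (0:ℝ) M, ENNReal.ofReal (2 ^ α * u ^ (α * κ)))
        + (∫⁻ u in Set.Ioi M, ENNReal.ofReal ((2 * |t|) ^ α * u ^ (α * κ - α)))
          * ENNReal.ofReal (|z| ^ α) := by
        rw [lintegral_add_left m1, lintegral_const_mul' _ _ ENNReal.ofReal_ne_top,
          lintegral_indicator measurableSet_Ioc, lintegral_indicator measurableSet_Ioi]
        ring

theorem stmt3 (α H κ t : ℝ) (hα0 : 0 < α) (hα2 : α < 2)
    (hH0 : 0 < H) (hH1 : H < 1) (hκ : κ = H - 1 / α)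
    (lam : Measure ℝ) [IsFiniteMeasure lam]
    (hmom : ∫⁻ z, ENNReal.ofReal (|z| ^ α) ∂lam < ⊤) :
    ∫⁻ z, (∫⁻ v in Set.Ioo (0:ℝ) (2 * π), ∫⁻ u : ℝ,
        ENNReal.ofReal (|Real.cos (v + z * Real.log |t + u|) * pPow κ (t + u)
          - Real.cos (v + z * Real.log |u|) * pPow κ u| ^ α)) ∂lam < ⊤ := by
  have hinv : 0 < 1 / α := by positivity
  have hκ1 : κ ≤ 1 := by rw [hκ]; nlinarith
  have heq1 : α * κ = α * H - 1 := by rw [hκ]; field_simp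
  have hκα : -1 < α * κ := by rw [heq1]; nlinarith
  have hκα' : α * (κ - 1) < -1 := by nlinarith [heq1]
  have hκα2 : α * κ - α < -1 := by nlinarith [hκα']
  obtain ⟨C1, C2, hC1, hC2, hC⟩ := Hfin hα0 hκα hκα2 t
  have hG := Gfin hα0 hκ1 hκα hκα' t
  set G : ENNReal := ∫⁻ u : ℝ, ENNReal.ofReal (|pPow κ (t + u) - pPow κ u| ^ α) with hGdef
  set K : ENNReal := ENNReal.ofReal (2 ^ α) with hKdef
  have hKfin : K < ⊤ := ENNReal.ofReal_lt_top
  -- pointwise bound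
  have hpt : ∀ z v u : ℝ,
      ENNReal.ofReal (|Real.cos (v + z * Real.log |t + u|) * pPow κ (t + u)
          - Real.cos (v + z * Real.log |u|) * pPow κ u| ^ α)
      ≤ ENNReal.ofReal (2 ^ α * |pPow κ (t + u) - pPow κ u| ^ α)
        + ENNReal.ofReal (2 ^ α
            * ((min 2 (|z| * |Real.log (abs (t + u)) - Real.log (abs u)|)) * pPow κ u) ^ α) := by
    intro z v u
    set A := v + z * Real.log (abs (t + u)) with hA
    set B := v + z * Real.log (abs u) with hB
    set X := pPow κ (t + u) with hX
    set Y := pPow κ u with hY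
    have hY0 : 0 ≤ Y := pPow_nonneg κ u
    set m := min 2 (|z| * |Real.log (abs (t + u)) - Real.log (abs u)|) with hm
    have hm0 : 0 ≤ m := le_min (by norm_num) (by positivity)
    have step1 : |Real.cos A * X - Real.cos B * Y| ≤ |X - Y| + m * Y := by
      have e : Real.cos A * X - Real.cos B * Y
          = Real.cos A * (X - Y) + (Real.cos A - Real.cos B) * Y := by ring
      rw [e]
      refine le_trans (abs_add_le _ _) ?_
      have t1 : |Real.cos A * (X - Y)| ≤ |X - Y| := by
        rw [abs_mul]
        exact mul_le_of_le_one_left (abs_nonneg _) (Real.abs_cos_le_one A)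
      have t2 : |(Real.cos A - Real.cos B) * Y| ≤ m * Y := by
        rw [abs_mul, abs_of_nonneg hY0]
        refine mul_le_mul_of_nonneg_right ?_ hY0
        refine le_min ?_ ?_
        · calc |Real.cos A - Real.cos B| ≤ |Real.cos A| + |Real.cos B| := abs_sub _ _
            _ ≤ 2 := by linarith [Real.abs_cos_le_one A, Real.abs_cos_le_one B]
        · have hAB : A - B = z * (Real.log (abs (t + u)) - Real.log (abs u)) := by
            rw [hA, hB]; ring
          calc |Real.cos A - Real.cos B| ≤ |A - B| := cos_diff_le A B
            _ = |z| * |Real.log (abs (t + u)) - Real.log (abs u)| := by rw [hAB, abs_mul]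
      linarith
    have step2 : |Real.cos A * X - Real.cos B * Y| ^ α
        ≤ 2 ^ α * |X - Y| ^ α + 2 ^ α * (m * Y) ^ α := by
      calc |Real.cos A * X - Real.cos B * Y| ^ α ≤ (|X - Y| + m * Y) ^ α :=
            Real.rpow_le_rpow (abs_nonneg _) step1 hα0.le
        _ ≤ 2 ^ α * (|X - Y| ^ α + (m * Y) ^ α) :=
            two_rpow_bound hα0.le (abs_nonneg _) (mul_nonneg hm0 hY0)
        _ = 2 ^ α * |X - Y| ^ α + 2 ^ α * (m * Y) ^ α := by ring
    calc ENNReal.ofReal (|Real.cos A * X - Real.cos B * Y| ^ α)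
        ≤ ENNReal.ofReal (2 ^ α * |X - Y| ^ α + 2 ^ α * (m * Y) ^ α) :=
          ENNReal.ofReal_le_ofReal step2
      _ ≤ ENNReal.ofReal (2 ^ α * |X - Y| ^ α) + ENNReal.ofReal (2 ^ α * (m * Y) ^ α) :=
          ENNReal.ofReal_add_le
  -- measurability of first dominating function
  have mrpα : Measurable fun x : ℝ => x ^ α := by measurability
  have hF1m : Measurable fun u : ℝ =>
      ENNReal.ofReal (2 ^ α * |pPow κ (t + u) - pPow κ u| ^ α) := by
    apply Measurable.ennreal_ofReal
    apply Measurable.const_mul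
    exact mrpα.comp ((((measurable_pPow κ).comp (measurable_const.add measurable_id)).sub
      (measurable_pPow κ)).abs)
  -- inner bound
  have hinner : ∀ z v : ℝ,
      (∫⁻ u : ℝ, ENNReal.ofReal (|Real.cos (v + z * Real.log |t + u|) * pPow κ (t + u)
        - Real.cos (v + z * Real.log |u|) * pPow κ u| ^ α))
      ≤ K * (G + C1) + (K * C2) * ENNReal.ofReal (|z| ^ α) := by
    intro z v
    have e2 : ∀ u : ℝ, ENNReal.ofReal (2 ^ α * |pPow κ (t + u) - pPow κ u| ^ α)
        = K * ENNReal.ofReal (|pPow κ (t + u) - pPow κ u| ^ α) :=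
      fun u => ENNReal.ofReal_mul (by positivity)
    have e3 : ∀ u : ℝ, ENNReal.ofReal (2 ^ α
          * ((min 2 (|z| * |Real.log (abs (t + u)) - Real.log (abs u)|)) * pPow κ u) ^ α)
        = K * ENNReal.ofReal
            (((min 2 (|z| * |Real.log (abs (t + u)) - Real.log (abs u)|)) * pPow κ u) ^ α) :=
      fun u => ENNReal.ofReal_mul (by positivity)
    calc (∫⁻ u : ℝ, ENNReal.ofReal (|Real.cos (v + z * Real.log |t + u|) * pPow κ (t + u)
          - Real.cos (v + z * Real.log |u|) * pPow κ u| ^ α))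
        ≤ ∫⁻ u : ℝ, (ENNReal.ofReal (2 ^ α * |pPow κ (t + u) - pPow κ u| ^ α)
            + ENNReal.ofReal (2 ^ α
              * ((min 2 (|z| * |Real.log (abs (t + u)) - Real.log (abs u)|)) * pPow κ u) ^ α)) :=
          lintegral_mono (hpt z v)
      _ = (∫⁻ u : ℝ, ENNReal.ofReal (2 ^ α * |pPow κ (t + u) - pPow κ u| ^ α))
          + (∫⁻ u : ℝ, ENNReal.ofReal (2 ^ α
              * ((min 2 (|z| * |Real.log (abs (t + u)) - Real.log (abs u)|)) * pPow κ u) ^ α)) :=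
          lintegral_add_left hF1m _
      _ = K * G + K * (∫⁻ u : ℝ, ENNReal.ofReal
            (((min 2 (|z| * |Real.log (abs (t + u)) - Real.log (abs u)|)) * pPow κ u) ^ α)) := by
          rw [lintegral_congr e2, lintegral_congr e3,
            lintegral_const_mul' _ _ ENNReal.ofReal_ne_top,
            lintegral_const_mul' _ _ ENNReal.ofReal_ne_top]
      _ ≤ K * G + K * (C1 + C2 * ENNReal.ofReal (|z| ^ α)) := by
          gcongr
          exact hC z
      _ = K * (G + C1) + (K * C2) * ENNReal.ofReal (|z| ^ α) := by ring
  set V : ENNReal := volume (Set.Ioo (0:ℝ) (2 * π)) with hVdef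
  have hVfin : V < ⊤ := by rw [hVdef, Real.volume_Ioo]; exact ENNReal.ofReal_lt_top
  have hmid : ∀ z : ℝ,
      (∫⁻ v in Set.Ioo (0:ℝ) (2 * π), ∫⁻ u : ℝ,
        ENNReal.ofReal (|Real.cos (v + z * Real.log |t + u|) * pPow κ (t + u)
          - Real.cos (v + z * Real.log |u|) * pPow κ u| ^ α))
      ≤ (K * (G + C1)) * V + ((K * C2) * V) * ENNReal.ofReal (|z| ^ α) := by
    intro z
    calc (∫⁻ v in Set.Ioo (0:ℝ) (2 * π), ∫⁻ u : ℝ,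
          ENNReal.ofReal (|Real.cos (v + z * Real.log |t + u|) * pPow κ (t + u)
            - Real.cos (v + z * Real.log |u|) * pPow κ u| ^ α))
        ≤ ∫⁻ _ in Set.Ioo (0:ℝ) (2 * π),
            (K * (G + C1) + (K * C2) * ENNReal.ofReal (|z| ^ α)) :=
          lintegral_mono fun v => hinner z v
      _ = (K * (G + C1) + (K * C2) * ENNReal.ofReal (|z| ^ α)) * V :=
          setLIntegral_const _ _
      _ = (K * (G + C1)) * V + ((K * C2) * V) * ENNReal.ofReal (|z| ^ α) := by ring
  have hKC2V : (K * C2) * V ≠ ⊤ :=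
    (ENNReal.mul_lt_top (ENNReal.mul_lt_top hKfin hC2) hVfin).ne
  calc ∫⁻ z, (∫⁻ v in Set.Ioo (0:ℝ) (2 * π), ∫⁻ u : ℝ,
        ENNReal.ofReal (|Real.cos (v + z * Real.log |t + u|) * pPow κ (t + u)
          - Real.cos (v + z * Real.log |u|) * pPow κ u| ^ α)) ∂lam
      ≤ ∫⁻ z, ((K * (G + C1)) * V + ((K * C2) * V) * ENNReal.ofReal (|z| ^ α)) ∂lam :=
        lintegral_mono hmid
    _ = (K * (G + C1)) * V * lam Set.univ
        + ((K * C2) * V) * ∫⁻ z, ENNReal.ofReal (|z| ^ α) ∂lam := by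
        rw [lintegral_add_left measurable_const, lintegral_const,
          lintegral_const_mul' _ _ hKC2V]
    _ < ⊤ := by
        apply ENNReal.add_lt_top.mpr
        constructor
        · exact ENNReal.mul_lt_top
            (ENNReal.mul_lt_top (ENNReal.mul_lt_top hKfin
              (ENNReal.add_lt_top.mpr ⟨hG, hC1⟩)) hVfin) (measure_lt_top lam _)
        · exact ENNReal.mul_lt_top (lt_of_le_of_ne (le_top) hKC2V) hmom
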